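/- (q-deformed Hosszú–Gluskin chain formula.) Let n ≥ 3, let G be an n-ary group with multiplication μₙ, fix e ∈ G with querelement ē, and let g ∗ h := μₙ[g, e^{n−3}, ē, h] be the associated binary group with identity e. Let q ≥ 1 be an integer such that ℓ_φ(q) := (q(n−2)+1)/(n−1) is a positive integer, define φ_q(g) as the ℓ_φ(q)-fold iterated μₙ-product of the sequence (e, g, followed by q copies of the polyadic inverse (e^{n−3}, ē)), and let b_q be the iterated μₙ-product of [[n]]_q := (qⁿ−1)/(q−1) copies of e. Then for all g₁, …, gₙ ∈ G: μₙ[g₁, …, gₙ] = g₁ ∗ φ_q^{[[1]]_q}(g₂) ∗ φ_q^{[[2]]_q}(g₃) ∗ ⋯ ∗ φ_q^{[[n−1]]_q}(gₙ) ∗ b_q, where [[k]]_q := (q^k−1)/(q−1). -/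

import Mathlib

/-- Total associativity of an `n`-ary operation `μ` given on lists: the composed
product of `2n-1` elements with one inner multiplication does not depend on the
position of the inner multiplication. -/
def TotAssoc {G : Type*} (n : ℕ) (μ : List G → G) : Prop :=
  ∀ p₁ c₁ s₁ p₂ c₂ s₂ : List G,
    c₁.length = n → c₂.length = n →
    p₁.length + s₁.length = n - 1 → p₂.length + s₂.length = n - 1 →
    p₁ ++ c₁ ++ s₁ = p₂ ++ c₂ ++ s₂ →
    μ (p₁ ++ μ c₁ :: s₁) = μ (p₂ ++ μ c₂ :: s₂)

/-- Unique solvability of an `n`-ary operation in each place `i = 0,…,n-1`. -/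
def UniqSolv {G : Type*} (n : ℕ) (μ : List G → G) : Prop :=
  ∀ (u : List G) (g : G), u.length = n - 1 →
    ∀ i ≤ n - 1, ∃! h : G, μ (u.take i ++ h :: u.drop i) = g

/-- The `ℓ`-fold iterated (left-nested) `n`-ary product of a list of
`ℓ(n-1)+1` elements; for `ℓ = 0` it returns the single element of the list. -/
def iterMu {G : Type*} (μ : List G → G) (n : ℕ) : ℕ → List G → G
  | 0, [] => μ []
  | 0, a :: _ => a
  | ℓ + 1, l => iterMu μ n ℓ (μ (l.take n) :: l.drop n)

/-- The Heine (`q`-deformed) number `[[k]]_q = (q^k - 1)/(q - 1)`, with `[[k]]₁ = k`. -/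
def heine (q k : ℕ) : ℕ := if q = 1 then k else (q ^ k - 1) / (q - 1)

namespace S7


variable {G : Type*}

lemma iterMu_succ (μ : List G → G) (n ℓ : ℕ) (l : List G) :
    iterMu μ n (ℓ+1) l = iterMu μ n ℓ (μ (l.take n) :: l.drop n) := rfl

lemma iterMu_zero_cons (μ : List G → G) (n : ℕ) (a : G) (l : List G) :
    iterMu μ n 0 (a :: l) = a := rfl

lemma iterMu_one (μ : List G → G) (n : ℕ) (l : List G) (h : l.length = n) :
    iterMu μ n 1 l = μ l := by
  rw [iterMu_succ, List.take_of_length_le h.le, List.drop_of_length_le h.le, iterMu_zero_cons]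


/-- Generalized associativity / substitution lemma. -/
lemma subLemma (k : ℕ) (μ : List G → G) (hassoc : TotAssoc (k+3) μ) :
    ∀ (a : ℕ) (A C B : List G) (ℓ : ℕ), A.length = a → C.length = k+3 →
      A.length + B.length = ℓ*(k+2) →
      iterMu μ (k+3) (ℓ+1) (A ++ C ++ B) = iterMu μ (k+3) ℓ (A ++ μ C :: B) := by
  intro a
  induction a using Nat.strong_induction_on with
  | _ a ih =>
    intro A C B ℓ hA hC hAB
    have hlnz : ℓ ≠ 0 ∨ a = 0 := by
      rcases Nat.eq_zero_or_pos a with h | h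
      · exact Or.inr h
      · left; rintro rfl; simp only [Nat.zero_mul] at hAB; omega
    rcases Nat.lt_or_ge a (k+3) with hsmall | hbig
    · rcases Nat.eq_zero_or_pos a with h0 | hpos
      · subst h0
        have : A = [] := List.eq_nil_of_length_eq_zero hA
        subst this
        rw [iterMu_succ]
        simp only [List.nil_append]
        rw [List.take_left' hC, List.drop_left' hC]
      · -- 1 ≤ a ≤ k+2
        obtain ⟨ℓ', rfl⟩ : ∃ ℓ', ℓ = ℓ' + 1 := by
          rcases hlnz with h | h
          · exact ⟨ℓ - 1, by omega⟩
          · omega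
        set C₁ := C.take (k+3-a) with hC₁
        set C₂ := C.drop (k+3-a) with hC₂
        set B₁ := B.take (k+2-a) with hB₁
        set B₂ := B.drop (k+2-a) with hB₂
        have hCsplit : C = C₁ ++ C₂ := (List.take_append_drop _ C).symm
        have hBsplit : B = B₁ ++ B₂ := (List.take_append_drop _ B).symm
        have hC₁len : C₁.length = k+3-a := by
          rw [hC₁, List.length_take]; omega
        have hC₂len : C₂.length = a := by
          rw [hC₂, List.length_drop]; omega
        have hBlen : k+2-a ≤ B.length := by
          have : (ℓ'+1)*(k+2) ≥ k+2 := Nat.le_mul_of_pos_left _ (by omega)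
          omega
        have hB₁len : B₁.length = k+2-a := by
          rw [hB₁, List.length_take]; omega
        have hAC₁len : (A ++ C₁).length = k+3 := by
          rw [List.length_append]; omega
        have key : μ ([] ++ μ (A ++ C₁) :: (C₂ ++ B₁)) = μ (A ++ μ C :: B₁) := by
          have := hassoc [] (A ++ C₁) (C₂ ++ B₁) A C B₁ hAC₁len hC
            (by simp only [List.length_nil, List.length_append]; omega)
            (by omega)
            (by simp only [List.nil_append, List.append_assoc]
                rw [← List.append_assoc C₁ C₂, ← hCsplit])
          simpa using this
        have e1 : A ++ C ++ B = (A ++ C₁) ++ (C₂ ++ B) := by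
          rw [hCsplit]; simp [List.append_assoc]
        have hcl : (μ (A ++ C₁) :: (C₂ ++ B₁)).length = k+3 := by
          simp only [List.length_cons, List.length_append]; omega
        have e2 : μ (A ++ C₁) :: (C₂ ++ B) = (μ (A ++ C₁) :: (C₂ ++ B₁)) ++ B₂ := by
          conv_lhs => rw [hBsplit]
          simp only [List.cons_append, List.append_assoc]
        have hrl : (A ++ μ C :: B₁).length = k+3 := by
          simp only [List.length_cons, List.length_append]; omega
        have e3 : A ++ μ C :: B = (A ++ μ C :: B₁) ++ B₂ := by
          conv_lhs => rw [hBsplit]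
          simp only [List.cons_append, List.append_assoc]
        rw [iterMu_succ, e1, List.take_left' hAC₁len, List.drop_left' hAC₁len,
          iterMu_succ, e2, List.take_left' hcl, List.drop_left' hcl,
          iterMu_succ, e3, List.take_left' hrl, List.drop_left' hrl]
        simp only [List.nil_append] at key
        rw [key]
    · -- a ≥ k+3
      obtain ⟨ℓ', rfl⟩ : ∃ ℓ', ℓ = ℓ' + 1 := by
        rcases hlnz with h | h
        · exact ⟨ℓ - 1, by omega⟩
        · omega
      set A₁ := A.take (k+3) with hA₁
      set A₂ := A.drop (k+3) with hA₂
      have hAsplit : A = A₁ ++ A₂ := (List.take_append_drop _ A).symm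
      have hA₁len : A₁.length = k+3 := by rw [hA₁, List.length_take]; omega
      have hA₂len : A₂.length = a - (k+3) := by rw [hA₂, List.length_drop]; omega
      have e1 : A ++ C ++ B = A₁ ++ (A₂ ++ C ++ B) := by
        conv_lhs => rw [hAsplit]
        simp [List.append_assoc]
      have e2 : A ++ μ C :: B = A₁ ++ (A₂ ++ μ C :: B) := by
        conv_lhs => rw [hAsplit]
        simp [List.append_assoc]
      conv_lhs => rw [iterMu_succ, e1, List.take_left' hA₁len, List.drop_left' hA₁len]
      conv_rhs => rw [iterMu_succ, e2, List.take_left' hA₁len, List.drop_left' hA₁len]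
      have hmul : (ℓ'+1)*(k+2) = ℓ'*(k+2) + (k+2) := by ring
      have := ih (a - (k+2)) (by omega) (μ A₁ :: A₂) C B ℓ'
        (by simp only [List.length_cons]; omega) hC
        (by simp only [List.length_cons]; omega)
      simpa using this

lemma subIter (k : ℕ) (μ : List G → G) (hassoc : TotAssoc (k+3) μ) :
    ∀ (m : ℕ) (A C B : List G) (ℓ : ℕ), C.length = m*(k+2)+1 →
      A.length + B.length = ℓ*(k+2) →
      iterMu μ (k+3) (m + ℓ) (A ++ C ++ B)
        = iterMu μ (k+3) ℓ (A ++ iterMu μ (k+3) m C :: B) := by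
  intro m
  induction m with
  | zero =>
    intro A C B ℓ hC hAB
    obtain ⟨c, rfl⟩ : ∃ c, C = [c] := by
      simp only [Nat.zero_mul, Nat.zero_add] at hC
      exact List.length_eq_one_iff.mp hC
    simp only [Nat.zero_add, iterMu_zero_cons]
    simp [List.append_assoc]
  | succ m IH =>
    intro A C B ℓ hC hAB
    set C₁ := C.take (k+3) with hC₁
    set C₂ := C.drop (k+3) with hC₂
    have hCsplit : C = C₁ ++ C₂ := (List.take_append_drop _ C).symm
    have hmul : (m+1)*(k+2) = m*(k+2) + (k+2) := by ring
    have hC₁len : C₁.length = k+3 := by rw [hC₁, List.length_take]; omega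
    have hC₂len : C₂.length = m*(k+2)+1 - 1 := by rw [hC₂, List.length_drop]; omega
    have e1 : A ++ C ++ B = A ++ C₁ ++ (C₂ ++ B) := by
      conv_lhs => rw [hCsplit]
      simp [List.append_assoc]
    have step1 : iterMu μ (k+3) (m + ℓ + 1) (A ++ C₁ ++ (C₂ ++ B))
        = iterMu μ (k+3) (m + ℓ) (A ++ μ C₁ :: (C₂ ++ B)) := by
      apply subLemma k μ hassoc A.length A C₁ (C₂ ++ B) (m + ℓ) rfl hC₁len
      rw [List.length_append]
      have : (m+ℓ)*(k+2) = m*(k+2) + ℓ*(k+2) := by ring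
      omega
    have e2 : A ++ μ C₁ :: (C₂ ++ B) = A ++ (μ C₁ :: C₂) ++ B := by
      simp [List.append_assoc]
    have step2 := IH A (μ C₁ :: C₂) B ℓ
      (by simp only [List.length_cons]; omega) hAB
    have hms : m + 1 + ℓ = m + ℓ + 1 := by omega
    rw [hms, e1, step1, e2, step2]
    rfl

lemma rep_merge (a b c : ℕ) (x : G) (l : List G) (h : a + b = c) :
    List.replicate a x ++ (List.replicate b x ++ l) = List.replicate c x ++ l := by
  subst h; rw [List.replicate_add, List.append_assoc]

section Doernte

variable (k : ℕ) (μ : List G → G) (e ebar : G)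

lemma lemmaA (hassoc : TotAssoc (k+3) μ) (hsolv : UniqSolv (k+3) μ)
    (hebar : μ (List.replicate (k+2) e ++ [ebar]) = e) :
    ∀ x : G, μ (x :: (List.replicate (k+1) e ++ [ebar])) = x := by
  intro x
  obtain ⟨z, hz, -⟩ := hsolv (List.replicate (k+2) e) x (by simp) 0 (by omega)
  simp only [List.take_zero, List.drop_zero, List.nil_append] at hz
  have key := hassoc [] (z :: List.replicate (k+2) e) (List.replicate (k+1) e ++ [ebar])
    (z :: List.replicate (k+1) e) (List.replicate (k+2) e ++ [ebar]) []
    (by simp) (by simp)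
    (by simp only [List.length_nil, List.length_cons, List.length_append,
          List.length_replicate]; omega)
    (by simp only [List.length_nil, List.length_cons, List.length_append,
          List.length_replicate]; omega)
    (by simp only [List.nil_append, List.append_nil, List.cons_append, List.append_assoc]
        rw [rep_merge (k+2) (k+1) (2*k+3) e _ (by omega),
          rep_merge (k+1) (k+2) (2*k+3) e _ (by omega)])
  simp only [List.nil_append, List.append_nil, hz, hebar] at key
  rw [key, List.cons_append, ← List.replicate_succ' (n := k+1) (a := e)]
  exact hz

lemma ebar_left (hassoc : TotAssoc (k+3) μ) (hsolv : UniqSolv (k+3) μ)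
    (hebar : μ (List.replicate (k+2) e ++ [ebar]) = e) :
    μ (ebar :: List.replicate (k+2) e) = e := by
  obtain ⟨et, het, -⟩ := hsolv (List.replicate (k+2) e) e (by simp) 0 (by omega)
  simp only [List.take_zero, List.drop_zero, List.nil_append] at het
  -- first prove: ∀ x, μ (et :: (replicate (k+1) e ++ [x])) = x
  have A2 : ∀ x : G, μ (et :: (List.replicate (k+1) e ++ [x])) = x := by
    intro x
    obtain ⟨z, hz, -⟩ := hsolv (List.replicate (k+2) e) x (by simp) (k+2) (by omega)
    rw [List.take_of_length_le (by simp), List.drop_of_length_le (by simp)] at hz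
    have key := hassoc [] (et :: List.replicate (k+2) e) (List.replicate (k+1) e ++ [z])
      (et :: List.replicate (k+1) e) (List.replicate (k+2) e ++ [z]) []
      (by simp) (by simp)
      (by simp only [List.length_nil, List.length_cons, List.length_append,
            List.length_replicate]; omega)
      (by simp only [List.length_nil, List.length_cons, List.length_append,
            List.length_replicate]; omega)
      (by simp only [List.nil_append, List.append_nil, List.cons_append, List.append_assoc]
          rw [rep_merge (k+2) (k+1) (2*k+3) e _ (by omega),
            rep_merge (k+1) (k+2) (2*k+3) e _ (by omega)])
    simp only [List.nil_append, List.append_nil, het] at key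
    rw [← List.cons_append, ← List.replicate_succ] at key
    have hz' : μ (List.replicate (k+1+1) e ++ [z]) = x := hz
    rw [hz'] at key
    rw [List.cons_append] at key
    exact key.symm
  have h1 := A2 ebar
  have h2 := lemmaA k μ e ebar hassoc hsolv hebar et
  rw [h1] at h2
  rw [← h2] at het
  exact het

lemma keyId (hassoc : TotAssoc (k+3) μ) (hsolv : UniqSolv (k+3) μ)
    (hebar : μ (List.replicate (k+2) e ++ [ebar]) = e) :
    ∀ x : G, μ (x :: (List.replicate k e ++ [ebar, e])) = x := by
  intro x
  have hbl := ebar_left k μ e ebar hassoc hsolv hebar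
  have key := hassoc (x :: List.replicate k e) (ebar :: List.replicate (k+2) e) [ebar]
    (x :: (List.replicate k e ++ [ebar])) (List.replicate (k+2) e ++ [ebar]) []
    (by simp) (by simp)
    (by simp only [List.length_nil, List.length_cons, List.length_append,
          List.length_replicate]; omega)
    (by simp only [List.length_nil, List.length_cons, List.length_append,
          List.length_replicate]; omega)
    (by simp only [List.nil_append, List.append_nil, List.cons_append, List.append_assoc])
  rw [hbl, hebar] at key
  have e1 : x :: List.replicate k e ++ [e, ebar]
      = x :: (List.replicate (k+1) e ++ [ebar]) := by
    simp only [List.cons_append]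
    congr 1
    rw [List.replicate_succ' (n := k) (a := e), List.append_assoc]
    rfl
  rw [e1] at key
  rw [lemmaA k μ e ebar hassoc hsolv hebar x] at key
  have e2 : x :: (List.replicate k e ++ [ebar, e])
      = x :: (List.replicate k e ++ [ebar]) ++ [e] := by
    simp [List.append_assoc]
  rw [e2]
  exact key.symm

end Doernte

section Heine

lemma heine_zero (q : ℕ) : heine q 0 = 0 := by
  unfold heine
  split <;> simp

lemma heine_succ (q : ℕ) (hq : 1 ≤ q) (i : ℕ) : heine q (i+1) = q * heine q i + 1 := by
  unfold heine
  rcases eq_or_ne q 1 with rfl | hne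
  · simp
  · simp only [hne, if_false]
    have h2 : 2 ≤ q := by omega
    obtain ⟨c, hc⟩ : (q - 1) ∣ q ^ i - 1 := by
      simpa using Nat.sub_dvd_pow_sub_pow q 1 i
    have hp : 1 ≤ q ^ i := Nat.one_le_pow _ _ (by omega)
    have hqi : q ^ i = (q-1) * c + 1 := by omega
    have hstep : q ^ (i+1) - 1 = (q - 1) * (q * c + 1) := by
      have : q ^ (i+1) = q * q ^ i := by ring
      rw [this, hqi]
      have e : q * ((q - 1) * c + 1) = (q-1)*(q*c+1) + 1 := by
        have : q * ((q-1)*c) = (q-1)*(q*c) := by ring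
        rw [Nat.mul_add, this, Nat.mul_add]
        omega
      omega
    rw [hstep, hc, Nat.mul_div_cancel_left _ (by omega : 0 < q - 1),
      Nat.mul_div_cancel_left _ (by omega : 0 < q - 1)]

lemma heine_one (q : ℕ) (hq : 1 ≤ q) : heine q 1 = 1 := by
  rw [show (1:ℕ) = 0 + 1 from rfl, heine_succ q hq 0, heine_zero]
  ring

end Heine

section TqL

variable {G : Type*}

/-- `j` copies of the polyadic inverse block `e^k ++ [ebar]`. -/
def tqL (k : ℕ) (e ebar : G) (j : ℕ) : List G :=
  (List.replicate j (List.replicate k e ++ [ebar])).flatten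

@[simp] lemma tqL_zero (k : ℕ) (e ebar : G) : tqL k e ebar 0 = [] := rfl

lemma tqL_succ (k : ℕ) (e ebar : G) (j : ℕ) :
    tqL k e ebar (j+1) = (List.replicate k e ++ [ebar]) ++ tqL k e ebar j := by
  unfold tqL
  rw [List.replicate_succ, List.flatten_cons]

lemma tqL_succ' (k : ℕ) (e ebar : G) (j : ℕ) :
    tqL k e ebar (j+1) = tqL k e ebar j ++ (List.replicate k e ++ [ebar]) := by
  unfold tqL
  rw [List.replicate_succ', List.flatten_append]
  simp

lemma tqL_add (k : ℕ) (e ebar : G) (a b : ℕ) :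
    tqL k e ebar (a+b) = tqL k e ebar a ++ tqL k e ebar b := by
  unfold tqL
  rw [List.replicate_add, List.flatten_append]

@[simp] lemma tqL_length (k : ℕ) (e ebar : G) (j : ℕ) :
    (tqL k e ebar j).length = j * (k+1) := by
  induction j with
  | zero => simp
  | succ j ih =>
    rw [tqL_succ]
    simp only [List.length_append, List.length_cons, List.length_replicate,
      List.length_nil, ih]
    ring

@[simp] lemma tqL_one (k : ℕ) (e ebar : G) :
    tqL k e ebar 1 = List.replicate k e ++ [ebar] := by
  simp [tqL]

end TqL

section Cancel

variable {G : Type*}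

/-- Cancellation of `kk` neutral blocks `t^kk e^kk` after an element. -/
lemma cancelTE (k : ℕ) (μ : List G → G) (e ebar : G) (hassoc : TotAssoc (k+3) μ)
    (key : ∀ x : G, μ (x :: (List.replicate k e ++ [ebar, e])) = x) :
    ∀ (kk ℓ : ℕ) (A B : List G) (x : G),
      (A ++ x :: B).length = ℓ*(k+2)+1 →
      iterMu μ (k+3) (ℓ + kk) (A ++ [x] ++ tqL k e ebar kk ++ List.replicate kk e ++ B)
        = iterMu μ (k+3) ℓ (A ++ [x] ++ B) := by
  intro kk
  induction kk with
  | zero => intro ℓ A B x hlen; simp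
  | succ kk ih =>
    intro ℓ A B x hlen
    have e1 : A ++ [x] ++ tqL k e ebar (kk+1) ++ List.replicate (kk+1) e ++ B
        = (A ++ [x] ++ List.replicate k e) ++ [ebar]
            ++ tqL k e ebar kk ++ List.replicate kk e ++ ([e] ++ B) := by
      rw [tqL_succ, List.replicate_succ' (n := kk) (a := e)]
      simp [List.append_assoc]
    have h2 : ((A ++ [x] ++ List.replicate k e) ++ ebar :: ([e] ++ B)).length
        = (ℓ+1)*(k+2)+1 := by
      simp only [List.length_append, List.length_cons, List.length_replicate,
        List.length_nil] at hlen ⊢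
      have hmul : (ℓ+1)*(k+2) = ℓ*(k+2) + (k+2) := by ring
      omega
    have step1 := ih (ℓ+1) (A ++ [x] ++ List.replicate k e) ([e] ++ B) ebar h2
    have hc : ℓ + (kk+1) = (ℓ+1) + kk := by omega
    rw [hc, e1, step1]
    -- now cancel the single block [x] ++ e^k ++ [ebar, e]
    have e2 : (A ++ [x] ++ List.replicate k e) ++ [ebar] ++ ([e] ++ B)
        = A ++ (x :: (List.replicate k e ++ [ebar, e])) ++ B := by
      simp [List.append_assoc]
    have step2 := subLemma k μ hassoc A.length A
      (x :: (List.replicate k e ++ [ebar, e])) B ℓ rfl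
      (by simp only [List.length_cons, List.length_append, List.length_replicate,
            List.length_nil] <;> omega)
      (by simp only [List.length_append, List.length_cons] at hlen ⊢; omega)
    rw [e2, step2, key x]
    simp [List.append_assoc]

end Cancel

section Chain

variable {G : Type*}

/-- The expanded chain of blocks for the fold. -/
def chainV (k q : ℕ) (e ebar : G) : ℕ → List G → List G
  | _, [] => []
  | j, x :: l =>
    (List.replicate k e ++ [ebar]) ++ List.replicate (heine q (j+1)) e ++ [x]
      ++ tqL k e ebar (q * heine q (j+1)) ++ chainV k q e ebar (j+1) l

def cntV (q lphi : ℕ) : ℕ → List ℕ → ℕ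
  | _, [] => 0
  | j, _ :: l => (heine q (j+1) * lphi + 1) + cntV q lphi (j+1) l

def cntD (q : ℕ) : ℕ → List ℕ → ℕ
  | j, [] => heine q (j+1)
  | j, _ :: l => heine q (j+1) + cntD q (j+1) l

@[simp] lemma chainV_nil (k q : ℕ) (e ebar : G) (j : ℕ) : chainV k q e ebar j [] = [] := rfl

lemma chainV_cons (k q : ℕ) (e ebar : G) (j : ℕ) (x : G) (l : List G) :
    chainV k q e ebar j (x :: l)
      = (List.replicate k e ++ [ebar]) ++ List.replicate (heine q (j+1)) e ++ [x]
          ++ tqL k e ebar (q * heine q (j+1)) ++ chainV k q e ebar (j+1) l := rfl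

lemma chainV_append_singleton (k q : ℕ) (e ebar : G) :
    ∀ (l : List G) (j : ℕ) (a : G),
      chainV k q e ebar j (l ++ [a])
        = chainV k q e ebar j l
            ++ ((List.replicate k e ++ [ebar])
                ++ List.replicate (heine q (j+l.length+1)) e ++ [a]
                ++ tqL k e ebar (q * heine q (j+l.length+1))) := by
  intro l
  induction l with
  | nil => intro j a; simp [chainV_cons, List.append_assoc]
  | cons y l ih =>
    intro j a
    rw [List.cons_append, chainV_cons, chainV_cons, ih (j+1) a]
    simp only [List.length_cons]
    rw [show j + (l.length+1) + 1 = j+1+l.length+1 from by omega]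
    simp [List.append_assoc]

lemma chainV_length (k q lphi : ℕ) (e ebar : G) (hlphi : lphi * (k+2) = q*(k+1)+1) :
    ∀ (l : List G) (j : ℕ),
      (chainV k q e ebar j l).length = cntV q lphi j (l.map fun _ => 0) * (k+2) := by
  intro l
  induction l with
  | nil => intro j; simp [cntV]
  | cons y l ih =>
    intro j
    rw [chainV_cons]
    simp only [List.length_append, List.length_cons, List.length_replicate,
      List.length_nil, tqL_length, ih (j+1), List.map_cons]
    show k + 1 + heine q (j+1) + 1 + q * heine q (j+1) * (k+1)
        + cntV q lphi (j+1) (l.map fun _ => 0) * (k+2)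
      = cntV q lphi j (0 :: l.map fun _ => 0) * (k+2)
    have hcv : cntV q lphi j (0 :: l.map fun _ => 0)
        = (heine q (j+1) * lphi + 1) + cntV q lphi (j+1) (l.map fun _ => 0) := rfl
    rw [hcv]
    have hz : (lphi : ℤ) * (k+2) = q*(k+1)+1 := by exact_mod_cast hlphi
    zify
    linear_combination (-(heine q (j+1) : ℤ)) * hz

lemma lenH (k q : ℕ) (e ebar : G) (hq : 1 ≤ q) :
    ∀ (l : List G) (j c : ℕ), c + 1 = heine q (j+1) →
      c*(k+1) + (chainV k q e ebar j l).length + (k+1) + heine q (j+l.length+1)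
        = cntD q j (l.map fun _ => 0) * (k+2) + l.length := by
  intro l
  induction l with
  | nil =>
    intro j c hc
    simp only [chainV_nil, List.length_nil, List.map_nil, List.length_nil]
    show c*(k+1) + 0 + (k+1) + heine q (j+0+1) = heine q (j+1) * (k+2) + 0
    have hz : (c : ℤ) + 1 = heine q (j+1) := by exact_mod_cast hc
    zify
    push_cast
    linear_combination ((k : ℤ)+1) * hz
  | cons y l ih =>
    intro j c hc
    rw [chainV_cons]
    have hc' : q * heine q (j+1) + 1 = heine q (j+1+1) := (heine_succ q hq (j+1)).symm
    have IH := ih (j+1) (q * heine q (j+1)) hc'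
    simp only [List.length_append, List.length_cons, List.length_replicate,
      List.length_nil, tqL_length, List.map_cons]
    have hcd : cntD q j (0 :: l.map fun _ => 0)
        = heine q (j+1) + cntD q (j+1) (l.map fun _ => 0) := rfl
    rw [hcd]
    have hidx : j + (l.length + 1) + 1 = j + 1 + l.length + 1 := by omega
    rw [hidx]
    have hz1 : (c : ℤ) + 1 = heine q (j+1) := by exact_mod_cast hc
    have hz2 : (q : ℤ) * heine q (j+1) * (k+1) + (chainV k q e ebar (j+1) l).length
          + (k+1) + heine q (j+1+l.length+1)
        = cntD q (j+1) (l.map fun _ => 0) * (k+2) + l.length := by exact_mod_cast IH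
    zify
    push_cast
    linear_combination hz2 + ((k : ℤ)+1) * hz1

end Chain

section Assemble

variable {G : Type*}

lemma phiIter (k q lphi : ℕ) (μ : List G → G) (e ebar : G)
    (hassoc : TotAssoc (k+3) μ) (φq : G → G)
    (hlphi : lphi * (k+2) = q*(k+1)+1)
    (hφq : ∀ g : G, φq g = iterMu μ (k+3) lphi (e :: g :: tqL k e ebar q)) :
    ∀ (kk : ℕ) (g : G),
      φq^[kk] g = iterMu μ (k+3) (kk*lphi)
        (List.replicate kk e ++ [g] ++ tqL k e ebar (q*kk)) := by
  intro kk
  induction kk with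
  | zero =>
    intro g
    simp [iterMu_zero_cons]
  | succ kk ih =>
    intro g
    rw [Function.iterate_succ_apply, ih (φq g), hφq g]
    have hsub := subIter k μ hassoc lphi (List.replicate kk e)
      (e :: g :: tqL k e ebar q) (tqL k e ebar (q*kk)) (kk*lphi)
      (by simp only [List.length_cons, tqL_length]; omega)
      (by simp only [List.length_replicate, tqL_length]
          have h1 : kk*lphi*(k+2) = kk*(q*(k+1)+1) := by rw [mul_assoc, hlphi]
          rw [h1]; ring)
    rw [show List.replicate kk e ++ [iterMu μ (k+3) lphi (e :: g :: tqL k e ebar q)]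
          ++ tqL k e ebar (q*kk)
        = List.replicate kk e ++ iterMu μ (k+3) lphi (e :: g :: tqL k e ebar q)
          :: tqL k e ebar (q*kk) from by simp [List.append_assoc]]
    rw [← hsub]
    have e1 : List.replicate kk e ++ (e :: g :: tqL k e ebar q) ++ tqL k e ebar (q*kk)
        = List.replicate (kk+1) e ++ [g] ++ tqL k e ebar (q*(kk+1)) := by
      rw [List.replicate_succ' (n := kk) (a := e),
        show q*(kk+1) = q + q*kk from by ring, tqL_add]
      simp [List.append_assoc]
    rw [e1]
    congr 1
    ring

lemma stMu (k : ℕ) (μ : List G → G) (e ebar : G) (hassoc : TotAssoc (k+3) μ)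
    (st : G → G → G)
    (hst : ∀ g h : G, st g h = μ (g :: (List.replicate k e ++ [ebar, h]))) :
    ∀ (a b : ℕ) (S T : List G), S.length = a*(k+2)+1 → T.length = b*(k+2)+1 →
      st (iterMu μ (k+3) a S) (iterMu μ (k+3) b T)
        = iterMu μ (k+3) (a+b+1) (S ++ (List.replicate k e ++ [ebar]) ++ T) := by
  intro a b S T hS hT
  set X := iterMu μ (k+3) a S with hX
  set Y := iterMu μ (k+3) b T with hY
  have h1 := subIter k μ hassoc b
    ([X] ++ (List.replicate k e ++ [ebar])) T [] 1 hT
    (by simp only [List.length_append, List.length_cons, List.length_replicate,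
        List.length_nil]; omega)
  have h2 := subIter k μ hassoc a [] S ((List.replicate k e ++ [ebar]) ++ T) (b+1) hS
    (by simp only [List.length_nil, List.length_append, List.length_replicate,
        List.length_cons, hT]
        have : (b+1)*(k+2) = b*(k+2) + (k+2) := by ring
        omega)
  have hlen1 : (([X] ++ (List.replicate k e ++ [ebar])) ++ [Y] ++ []).length = k+3 := by
    simp only [List.length_append, List.length_cons, List.length_replicate,
      List.length_nil]
    omega
  calc st X Y = μ (X :: (List.replicate k e ++ [ebar, Y])) := hst X Y
    _ = iterMu μ (k+3) 1 (([X] ++ (List.replicate k e ++ [ebar])) ++ [Y] ++ []) := by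
        rw [iterMu_one _ _ _ hlen1]
        congr 1
        simp [List.append_assoc]
    _ = iterMu μ (k+3) 1 (([X] ++ (List.replicate k e ++ [ebar])) ++ Y :: []) := by
        congr 1
        simp
    _ = iterMu μ (k+3) (b+1) (([X] ++ (List.replicate k e ++ [ebar])) ++ T ++ []) :=
        h1.symm
    _ = iterMu μ (k+3) (b+1) ([] ++ X :: ((List.replicate k e ++ [ebar]) ++ T)) := by
        congr 1
        simp [List.append_assoc]
    _ = iterMu μ (k+3) (a+(b+1)) ([] ++ S ++ ((List.replicate k e ++ [ebar]) ++ T)) :=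
        h2.symm
    _ = iterMu μ (k+3) (a+b+1) (S ++ (List.replicate k e ++ [ebar]) ++ T) := by
        rw [show a+(b+1) = a+b+1 from by omega]
        congr 1
        simp [List.append_assoc]

lemma cntV_append_singleton (q lphi : ℕ) :
    ∀ (l : List ℕ) (j : ℕ),
      cntV q lphi j (l ++ [0]) = cntV q lphi j l + (heine q (j+l.length+1) * lphi + 1) := by
  intro l
  induction l with
  | nil =>
    intro j
    show (heine q (j+1) * lphi + 1) + cntV q lphi (j+1) []
      = cntV q lphi j [] + (heine q (j+0+1) * lphi + 1)
    simp [cntV]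
  | cons y l ih =>
    intro j
    show (heine q (j+1) * lphi + 1) + cntV q lphi (j+1) (l ++ [0])
      = (heine q (j+1) * lphi + 1) + cntV q lphi (j+1) l + (heine q (j+(l.length+1)+1) * lphi + 1)
    rw [ih (j+1), show j+(l.length+1)+1 = j+1+l.length+1 from by omega]
    omega

lemma foldLem (k q lphi : ℕ) (μ : List G → G) (e ebar : G)
    (hassoc : TotAssoc (k+3) μ) (st : G → G → G)
    (hst : ∀ g h : G, st g h = μ (g :: (List.replicate k e ++ [ebar, h])))
    (φq : G → G) (hlphi : lphi * (k+2) = q*(k+1)+1)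
    (hφq : ∀ g : G, φq g = iterMu μ (k+3) lphi (e :: g :: tqL k e ebar q)) (g₀ : G) :
    ∀ l : List G,
      List.foldl st g₀ (l.mapIdx fun i x => φq^[heine q (i+1)] x)
        = iterMu μ (k+3) (cntV q lphi 0 (l.map fun _ => 0))
            (g₀ :: chainV k q e ebar 0 l) := by
  have hz : (lphi : ℤ) * (k+2) = q*(k+1)+1 := by exact_mod_cast hlphi
  intro l
  induction l using List.reverseRecOn with
  | nil => simp [cntV, iterMu_zero_cons]
  | append_singleton l a ih =>
    rw [List.mapIdx_append_one, List.foldl_append, List.foldl_cons, List.foldl_nil, ih]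
    set h := heine q (l.length+1) with hh
    rw [phiIter k q lphi μ e ebar hassoc φq hlphi hφq h a]
    have hlen1 : (g₀ :: chainV k q e ebar 0 l).length
        = (cntV q lphi 0 (l.map fun _ => 0))*(k+2)+1 := by
      simp only [List.length_cons, chainV_length k q lphi e ebar hlphi l 0]
    have hlen2 : (List.replicate h e ++ [a] ++ tqL k e ebar (q*h)).length
        = (h*lphi)*(k+2)+1 := by
      simp only [List.length_append, List.length_cons, List.length_replicate,
        List.length_nil, tqL_length]
      zify
      linear_combination (-(h:ℤ)) * hz
    rw [stMu k μ e ebar hassoc st hst _ _ _ _ hlen1 hlen2]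
    have ecnt : cntV q lphi 0 ((l ++ [a]).map fun _ => 0)
        = cntV q lphi 0 (l.map fun _ => 0) + h*lphi + 1 := by
      rw [List.map_append]
      show cntV q lphi 0 ((l.map fun _ => 0) ++ [0]) = _
      rw [cntV_append_singleton q lphi (l.map fun _ => 0) 0]
      simp only [List.length_map, Nat.zero_add, ← hh]
      omega
    have elist : (g₀ :: chainV k q e ebar 0 l) ++ (List.replicate k e ++ [ebar])
          ++ (List.replicate h e ++ [a] ++ tqL k e ebar (q*h))
        = g₀ :: chainV k q e ebar 0 (l ++ [a]) := by
      rw [chainV_append_singleton k q e ebar l 0 a]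
      simp only [Nat.zero_add, ← hh]
      simp [List.append_assoc]
    rw [ecnt, elist]

lemma claimD (k q : ℕ) (μ : List G → G) (e ebar : G) (hq : 1 ≤ q)
    (hassoc : TotAssoc (k+3) μ)
    (key : ∀ x : G, μ (x :: (List.replicate k e ++ [ebar, e])) = x) :
    ∀ (l : List G) (j : ℕ) (A : List G) (x : G) (ℓ c : ℕ),
      c + 1 = heine q (j+1) →
      (A ++ x :: l).length = ℓ*(k+2)+1 →
      iterMu μ (k+3) (ℓ + cntD q j (l.map fun _ => 0))
        (A ++ [x] ++ tqL k e ebar c ++ chainV k q e ebar j l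
          ++ (List.replicate k e ++ [ebar])
          ++ List.replicate (heine q (j + l.length + 1)) e)
        = iterMu μ (k+3) ℓ (A ++ x :: l) := by
  intro l
  induction l with
  | nil =>
    intro j A x ℓ c hc hlen
    simp only [List.length_nil, List.map_nil]
    have e1 : A ++ [x] ++ tqL k e ebar c ++ chainV k q e ebar j []
          ++ (List.replicate k e ++ [ebar]) ++ List.replicate (heine q (j+0+1)) e
        = A ++ [x] ++ tqL k e ebar (c+1)
            ++ List.replicate (heine q (j+0+1)) e ++ [] := by
      simp [tqL_succ', List.append_assoc]
    rw [e1, hc]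
    rw [show j + 0 + 1 = j + 1 from by omega]
    have := cancelTE k μ e ebar hassoc key (heine q (j+1)) ℓ A [] x
      (by simpa using hlen)
    rw [show cntD q j ([] : List ℕ) = heine q (j+1) from rfl]
    rw [this]
    simp
  | cons y l ih =>
    intro j A x ℓ c hc hlen
    set m := heine q (j+1) with hm
    have e1 : A ++ [x] ++ tqL k e ebar c ++ chainV k q e ebar j (y :: l)
          ++ (List.replicate k e ++ [ebar])
          ++ List.replicate (heine q (j + (y :: l).length + 1)) e
        = A ++ [x] ++ tqL k e ebar (c+1) ++ List.replicate m e
            ++ ([y] ++ tqL k e ebar (q*m) ++ chainV k q e ebar (j+1) l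
              ++ (List.replicate k e ++ [ebar])
              ++ List.replicate (heine q ((j+1) + l.length + 1)) e) := by
      rw [chainV_cons,
        show j + (y :: l).length + 1 = (j+1) + l.length + 1 from by
          simp only [List.length_cons]; omega]
      simp [tqL_succ', List.append_assoc, hm]
    rw [e1, hc]
    have hlenB : (A ++ x :: ([y] ++ tqL k e ebar (q*m) ++ chainV k q e ebar (j+1) l
          ++ (List.replicate k e ++ [ebar])
          ++ List.replicate (heine q ((j+1) + l.length + 1)) e)).length
        = (ℓ + cntD q (j+1) (l.map fun _ => 0))*(k+2)+1 := by
      have hH := lenH k q e ebar hq l (j+1) (q*m)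
        (by rw [hm, (heine_succ q hq (j+1)).symm])
      simp only [List.length_append, List.length_cons, List.length_replicate,
        List.length_nil, tqL_length] at hH hlen ⊢
      have hmul : (ℓ + cntD q (j+1) (l.map fun _ => 0))*(k+2)
          = ℓ*(k+2) + cntD q (j+1) (l.map fun _ => 0)*(k+2) := by ring
      omega
    have step1 := cancelTE k μ e ebar hassoc key m (ℓ + cntD q (j+1) (l.map fun _ => 0))
      A ([y] ++ tqL k e ebar (q*m) ++ chainV k q e ebar (j+1) l
        ++ (List.replicate k e ++ [ebar])
        ++ List.replicate (heine q ((j+1) + l.length + 1)) e) x hlenB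
    have hcnt : ℓ + cntD q j ((y :: l).map fun _ => 0)
        = ℓ + cntD q (j+1) (l.map fun _ => 0) + m := by
      show ℓ + (heine q (j+1) + cntD q (j+1) (l.map fun _ => 0)) = _
      omega
    rw [hcnt, step1]
    have step2 := ih (j+1) (A ++ [x]) y ℓ (q*m)
      (by rw [hm, (heine_succ q hq (j+1)).symm])
      (by simp only [List.length_append, List.length_cons, List.length_nil] at hlen ⊢
          omega)
    have e2 : A ++ [x] ++ ([y] ++ tqL k e ebar (q*m) ++ chainV k q e ebar (j+1) l
          ++ (List.replicate k e ++ [ebar])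
          ++ List.replicate (heine q ((j+1) + l.length + 1)) e)
        = (A ++ [x]) ++ [y] ++ tqL k e ebar (q*m) ++ chainV k q e ebar (j+1) l
            ++ (List.replicate k e ++ [ebar])
            ++ List.replicate (heine q ((j+1) + l.length + 1)) e := by
      simp [List.append_assoc]
    rw [e2, step2]
    congr 1
    simp [List.append_assoc]

end Assemble

end S7

/-- **q-deformed Hosszú–Gluskin chain formula.** On an `n`-ary
group (`n ≥ 3`) with distinguished element `e` (querelement `ē`), binary product
`g ∗ h = μₙ[g, e^{n-3}, ē, h]`, and an integer `q ≥ 1` with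
`ℓ_φ(q) = (q(n-2)+1)/(n-1)` a positive integer, let `φ_q(g)` be the
`ℓ_φ(q)`-fold iterated μ-product of `(e, g, (e^{n-3}, ē)^q)` and `b_q` the
iterated μ-product of `[[n]]_q` copies of `e`. Then
`μₙ[g₁,…,gₙ] = g₁ ∗ φ_q^{[[1]]_q}(g₂) ∗ ⋯ ∗ φ_q^{[[n-1]]_q}(gₙ) ∗ b_q`. -/
theorem statement7 {G : Type*} (n q : ℕ) (hn : 3 ≤ n) (hq : 1 ≤ q)
    (μ : List G → G) (hassoc : TotAssoc n μ) (hsolv : UniqSolv n μ)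
    (e ebar : G) (hebar : μ (List.replicate (n - 1) e ++ [ebar]) = e)
    (st : G → G → G)
    (hst : ∀ g h : G, st g h = μ (g :: (List.replicate (n - 3) e ++ [ebar, h])))
    (lphi : ℕ) (hlphi : lphi * (n - 1) = q * (n - 2) + 1)
    (φq : G → G)
    (hφq : ∀ g : G, φq g = iterMu μ n lphi
      (e :: g :: (List.replicate q (List.replicate (n - 3) e ++ [ebar])).flatten))
    (le : ℕ) (hle : le * (n - 1) + 1 = heine q n)
    (bq : G) (hbq : bq = iterMu μ n le (List.replicate (heine q n) e)) :
    ∀ (g₀ : G) (rest : List G), rest.length = n - 1 →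
      μ (g₀ :: rest) =
        st (List.foldl st g₀ (rest.mapIdx fun i x => φq^[heine q (i + 1)] x)) bq := by
  obtain ⟨k, rfl⟩ : ∃ k, n = k + 3 := ⟨n - 3, by omega⟩
  rw [show k+3-1 = k+2 from by omega] at hebar hlphi hle
  rw [show k+3-2 = k+1 from by omega] at hlphi
  rw [show k+3-3 = k from by omega] at hst hφq
  intro g₀ rest hrest
  rw [show k+3-1 = k+2 from by omega] at hrest
  have hφq' : ∀ g : G, φq g = iterMu μ (k+3) lphi (e :: g :: S7.tqL k e ebar q) := hφq
  have key := S7.keyId k μ e ebar hassoc hsolv hebar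
  have fold := S7.foldLem k q lphi μ e ebar hassoc st hst φq hlphi hφq' g₀ rest
  set CV := S7.cntV q lphi 0 (rest.map fun _ => 0) with hCV
  set Sg := g₀ :: S7.chainV k q e ebar 0 rest with hSg
  set T := List.replicate (heine q (k+3)) e with hT
  have hlen1 : Sg.length = CV*(k+2)+1 := by
    rw [hSg, List.length_cons, S7.chainV_length k q lphi e ebar hlphi rest 0]
  have hlen2 : T.length = le*(k+2)+1 := by
    rw [hT, List.length_replicate, hle]
  rw [hbq, fold, S7.stMu k μ e ebar hassoc st hst CV le Sg T hlen1 hlen2]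
  -- the big list of claimD
  have hc0 : (0:ℕ) + 1 = heine q (0+1) := by
    rw [S7.heine_one q hq]
  have hlen0 : (([] : List G) ++ g₀ :: rest).length = 1*(k+2)+1 := by
    simp [hrest]
  have hD := S7.claimD k q μ e ebar hq hassoc key rest 0 [] g₀ 1 0 hc0 hlen0
  have Leq : Sg ++ (List.replicate k e ++ [ebar]) ++ T
      = [] ++ [g₀] ++ S7.tqL k e ebar 0 ++ S7.chainV k q e ebar 0 rest
          ++ (List.replicate k e ++ [ebar])
          ++ List.replicate (heine q (0 + rest.length + 1)) e := by
    rw [hSg, hT, S7.tqL_zero, hrest,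
      show 0 + (k+2) + 1 = k+3 from by omega]
    simp [List.append_assoc]
  -- counts agree, via computing the length of the big list in two ways
  have hH := S7.lenH k q e ebar hq rest 0 0 hc0
  have hcnt : CV + le + 1 = 1 + S7.cntD q 0 (rest.map fun _ => 0) := by
    have hlenA : (Sg ++ (List.replicate k e ++ [ebar]) ++ T).length
        = (CV + le + 1)*(k+2) + 1 := by
      simp only [List.length_append, List.length_cons, List.length_replicate,
        List.length_nil, hlen1, hlen2]
      have : (CV + le + 1)*(k+2) = CV*(k+2) + le*(k+2) + (k+2) := by ring
      omega
    have hlenB : (Sg ++ (List.replicate k e ++ [ebar]) ++ T).length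
        = (1 + S7.cntD q 0 (rest.map fun _ => 0))*(k+2) + 1 := by
      rw [Leq]
      simp only [List.length_append, List.length_cons, List.length_replicate,
        List.length_nil, S7.tqL_length] at hH ⊢
      have : (1 + S7.cntD q 0 (rest.map fun _ => 0))*(k+2)
          = (k+2) + S7.cntD q 0 (rest.map fun _ => 0)*(k+2) := by ring
      omega
    have := hlenA.symm.trans hlenB
    have hmm : (CV + le + 1)*(k+2) = (1 + S7.cntD q 0 (rest.map fun _ => 0))*(k+2) := by
      omega
    exact Nat.eq_of_mul_eq_mul_right (by omega) hmm
  rw [hcnt, Leq, hD]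
  rw [S7.iterMu_one μ (k+3) _ (by simp [hrest])]
  simp
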